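/- Let X ∈ RV⁰_{α₁} and Y ∈ RV⁰_{α₂} be independent nonnegative random variables regularly varying at zero with positive exponents α₁, α₂. Then X + Y is regularly varying at zero with exponent α₁ + α₂. -/

import Mathlib

open MeasureTheory ProbabilityTheory Filter

noncomputable section

/-- A random variable `X` is regularly varying at zero with exponent `α`:
`lim_{t↓0} P(X ≤ tx)/P(X ≤ t) = x^α` for all `x > 0`. -/
def RegVarZero {Ω : Type*} [MeasurableSpace Ω] (μ : Measure Ω) (X : Ω → ℝ) (α : ℝ) : Prop :=
  ∀ x : ℝ, 0 < x →
    Tendsto (fun t : ℝ => (μ {ω | X ω ≤ t * x}).toReal / (μ {ω | X ω ≤ t}).toReal)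
      (nhdsWithin 0 (Set.Ioi 0)) (nhds (x ^ α))

end

open Set
open scoped ENNReal

/-- A real-valued function eventually trapped in arbitrarily short intervals converges. -/
lemma regVar_cauchy_aux (l : Filter ℝ) [l.NeBot] (R : ℝ → ℝ)
    (h : ∀ ε > (0:ℝ), ∃ a b : ℝ, b - a ≤ ε ∧ ∀ᶠ t in l, R t ∈ Set.Icc a b) :
    ∃ C, Tendsto R l (nhds C) := by
  have hc : Cauchy (Filter.map R l) := by
    rw [Metric.cauchy_iff]
    refine ⟨Filter.map_neBot, fun ε hε => ?_⟩
    obtain ⟨a, b, hab, hev⟩ := h (ε / 2) (by positivity)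
    refine ⟨Set.Icc a b, Filter.mem_map.mpr hev, fun x hx y hy => ?_⟩
    calc dist x y ≤ b - a := Real.dist_le_of_mem_Icc hx hy
      _ ≤ ε / 2 := hab
      _ < ε := by linarith
  obtain ⟨C, hC⟩ := CompleteSpace.complete hc
  exact ⟨C, hC⟩

/-- Locate a point of `(0, t]` in one of `n` equal subintervals. -/
lemma regVar_exists_step (n : ℕ) (hn : 0 < n) (t u : ℝ) (ht : 0 < t) (hu0 : 0 < u)
    (hut : u ≤ t) :
    ∃ i ∈ Finset.range n, t * ((i : ℝ) / n) < u ∧ u ≤ t * (((i : ℝ) + 1) / n) := by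
  have hn' : (0:ℝ) < n := by exact_mod_cast hn
  set v : ℝ := u * n / t with hv
  have hv0 : 0 < v := by positivity
  have hvn : v ≤ n := by
    rw [hv, div_le_iff₀ ht]
    calc u * n ≤ t * n := by nlinarith
      _ = (n:ℝ) * t := by ring
  have hceil1 : 1 ≤ ⌈v⌉₊ := Nat.one_le_ceil_iff.mpr hv0
  refine ⟨⌈v⌉₊ - 1, ?_, ?_, ?_⟩
  · have : ⌈v⌉₊ ≤ n := Nat.ceil_le.mpr hvn
    simp only [Finset.mem_range]
    omega
  · have hcast : ((⌈v⌉₊ - 1 : ℕ) : ℝ) = (⌈v⌉₊ : ℝ) - 1 := by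
      push_cast [hceil1]; ring
    have h1 : ((⌈v⌉₊ - 1 : ℕ) : ℝ) < v := by
      rw [hcast]
      have := Nat.ceil_lt_add_one hv0.le (R := ℝ)
      linarith
    have hu' : u = v * (t / n) := by
      rw [hv]; field_simp
    rw [hu']
    have : t * (((⌈v⌉₊ - 1 : ℕ) : ℝ) / n) = ((⌈v⌉₊ - 1 : ℕ) : ℝ) * (t / n) := by ring
    rw [this]
    exact mul_lt_mul_of_pos_right h1 (by positivity)
  · have h2 : v ≤ ((⌈v⌉₊ - 1 : ℕ) : ℝ) + 1 := by
      have hcast : ((⌈v⌉₊ - 1 : ℕ) : ℝ) = (⌈v⌉₊ : ℝ) - 1 := by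
        push_cast [hceil1]; ring
      rw [hcast]
      have := Nat.le_ceil v
      linarith
    have hu' : u = v * (t / n) := by
      rw [hv]; field_simp
    rw [hu']
    have : t * ((((⌈v⌉₊ - 1 : ℕ) : ℝ) + 1) / n) = (((⌈v⌉₊ - 1 : ℕ) : ℝ) + 1) * (t / n) := by
      ring
    rw [this]
    exact mul_le_mul_of_nonneg_right h2 (by positivity)

/-- The Riemann-sum upper and lower approximations differ by at most `ε` for suitable `n`. -/
lemma regVar_riemann_aux (α₁ α₂ : ℝ) (hα₁ : 0 < α₁) (hα₂ : 0 < α₂) (ε : ℝ) (hε : 0 < ε) :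
    ∃ n : ℕ, 0 < n ∧
      (∑ i ∈ Finset.range n, ((((i : ℝ) + 1) / n) ^ α₁ - ((i : ℝ) / n) ^ α₁) *
          (((n : ℝ) - i) / n) ^ α₂)
        - (∑ i ∈ Finset.range n, ((((i : ℝ) + 1) / n) ^ α₁ - ((i : ℝ) / n) ^ α₁) *
          (((n : ℝ) - 1 - i) / n) ^ α₂) ≤ ε := by
  -- uniform continuity of `u ↦ u ^ α₂` on `[0, 1]`
  have hg : ContinuousOn (fun u : ℝ => u ^ α₂) (Icc 0 1) := fun u _ =>
    (Real.continuousAt_rpow_const u α₂ (Or.inr hα₂.le)).continuousWithinAt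
  have huc := isCompact_Icc.uniformContinuousOn_of_continuous hg
  rw [Metric.uniformContinuousOn_iff] at huc
  obtain ⟨δ, hδ, hδ'⟩ := huc ε hε
  obtain ⟨n, hn⟩ := exists_nat_gt (1 / δ)
  have hn0 : 0 < n := by
    rcases Nat.eq_zero_or_pos n with h | h
    · subst h
      simp only [Nat.cast_zero] at hn
      have : (0:ℝ) < 1 / δ := by positivity
      linarith
    · exact h
  refine ⟨n, hn0, ?_⟩
  have hn' : (0:ℝ) < n := by exact_mod_cast hn0
  have hinv : 1 / (n:ℝ) < δ := by
    rw [div_lt_iff₀ hn']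
    rw [div_lt_iff₀ hδ] at hn
    nlinarith
  rw [← Finset.sum_sub_distrib]
  have key : ∀ i ∈ Finset.range n,
      ((((i : ℝ) + 1) / n) ^ α₁ - ((i : ℝ) / n) ^ α₁) * (((n : ℝ) - i) / n) ^ α₂
        - ((((i : ℝ) + 1) / n) ^ α₁ - ((i : ℝ) / n) ^ α₁) * (((n : ℝ) - 1 - i) / n) ^ α₂
      ≤ ((((i : ℝ) + 1) / n) ^ α₁ - ((i : ℝ) / n) ^ α₁) * ε := by
    intro i hi
    rw [Finset.mem_range] at hi
    have hi' : (i : ℝ) ≤ (n : ℝ) - 1 := by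
      have : (i : ℝ) + 1 ≤ n := by exact_mod_cast hi
      linarith
    have hΔ : 0 ≤ (((i : ℝ) + 1) / n) ^ α₁ - ((i : ℝ) / n) ^ α₁ := by
      have h := Real.rpow_le_rpow (by positivity : (0:ℝ) ≤ (i:ℝ)/n)
        (by gcongr; linarith : (i:ℝ)/n ≤ ((i:ℝ)+1)/n) hα₁.le
      linarith
    rw [← mul_sub]
    refine mul_le_mul_of_nonneg_left ?_ hΔ
    have hc : ((n : ℝ) - i) / n ∈ Icc (0:ℝ) 1 := by
      constructor
      · apply div_nonneg _ hn'.le; linarith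
      · rw [div_le_one hn']; push_cast; linarith [Nat.cast_nonneg (α := ℝ) i]
    have hc' : ((n : ℝ) - 1 - i) / n ∈ Icc (0:ℝ) 1 := by
      constructor
      · apply div_nonneg _ hn'.le; linarith
      · rw [div_le_one hn']; linarith [Nat.cast_nonneg (α := ℝ) i]
    have hdiff : ((n : ℝ) - i) / n - ((n : ℝ) - 1 - i) / n = 1 / n := by
      field_simp
      ring
    have hd := hδ' _ hc _ hc' (by
      rw [Real.dist_eq, hdiff, abs_of_pos (by positivity)]
      exact hinv)
    rw [Real.dist_eq] at hd
    have := abs_lt.mp hd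
    linarith [this.2]
  calc (∑ i ∈ Finset.range n,
        (((((i : ℝ) + 1) / n) ^ α₁ - ((i : ℝ) / n) ^ α₁) * (((n : ℝ) - i) / n) ^ α₂
        - ((((i : ℝ) + 1) / n) ^ α₁ - ((i : ℝ) / n) ^ α₁) * (((n : ℝ) - 1 - i) / n) ^ α₂))
      ≤ ∑ i ∈ Finset.range n, ((((i : ℝ) + 1) / n) ^ α₁ - ((i : ℝ) / n) ^ α₁) * ε :=
        Finset.sum_le_sum key
    _ = (∑ i ∈ Finset.range n, ((((i : ℝ) + 1) / n) ^ α₁ - ((i : ℝ) / n) ^ α₁)) * ε := by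
        rw [Finset.sum_mul]
    _ ≤ ε := by
        have htel : (∑ i ∈ Finset.range n,
            ((((i : ℝ) + 1) / n) ^ α₁ - ((i : ℝ) / n) ^ α₁)) = 1 := by
          have h := Finset.sum_range_sub (f := fun i : ℕ => ((i : ℝ) / n) ^ α₁) n
          simp only [Nat.cast_add, Nat.cast_one] at h
          rw [h, div_self hn'.ne', Real.one_rpow, Nat.cast_zero, zero_div,
            Real.zero_rpow hα₁.ne', sub_zero]
        rw [htel, one_mul]

/-- if `X ∈ RV⁰_{α₁}` and `Y ∈ RV⁰_{α₂}` are independent nonnegative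
random variables with `α₁, α₂ > 0`, then `X + Y ∈ RV⁰_{α₁+α₂}`. -/
theorem regVarZero_add {Ω : Type*} [MeasurableSpace Ω] (μ : Measure Ω)
    [IsProbabilityMeasure μ] (X Y : Ω → ℝ)
    (hXm : Measurable X) (hYm : Measurable Y)
    (hX0 : ∀ ω, 0 ≤ X ω) (hY0 : ∀ ω, 0 ≤ Y ω)
    (hindep : IndepFun X Y μ) (α₁ α₂ : ℝ) (hα₁ : 0 < α₁) (hα₂ : 0 < α₂)
    (hX : RegVarZero μ X α₁) (hY : RegVarZero μ Y α₂) :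
    RegVarZero μ (fun ω => X ω + Y ω) (α₁ + α₂) := by
  classical
  set l : Filter ℝ := nhdsWithin 0 (Set.Ioi 0) with hldef
  have hlne : l.NeBot := by rw [hldef]; infer_instance
  set F : ℝ → ℝ := fun t => (μ {ω | X ω ≤ t}).toReal with hFdef
  set H : ℝ → ℝ := fun t => (μ {ω | Y ω ≤ t}).toReal with hHdef
  set G : ℝ → ℝ := fun t => (μ {ω | X ω + Y ω ≤ t}).toReal with hGdef
  have hX' : ∀ x : ℝ, 0 < x → Tendsto (fun t => F (t * x) / F t) l (nhds (x ^ α₁)) := hX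
  have hY' : ∀ x : ℝ, 0 < x → Tendsto (fun t => H (t * x) / H t) l (nhds (x ^ α₂)) := hY
  have mX : ∀ t : ℝ, MeasurableSet {ω | X ω ≤ t} := fun t => hXm measurableSet_Iic
  have mY : ∀ t : ℝ, MeasurableSet {ω | Y ω ≤ t} := fun t => hYm measurableSet_Iic
  have hFnn : ∀ t, 0 ≤ F t := fun t => ENNReal.toReal_nonneg
  have hHnn : ∀ t, 0 ≤ H t := fun t => ENNReal.toReal_nonneg
  have hFle1 : ∀ t, F t ≤ 1 := by
    intro t
    have h1 : μ {ω | X ω ≤ t} ≤ 1 := prob_le_one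
    calc F t ≤ (1 : ℝ≥0∞).toReal := ENNReal.toReal_mono ENNReal.one_ne_top h1
      _ = 1 := by simp
  have hHle1 : ∀ t, H t ≤ 1 := by
    intro t
    have h1 : μ {ω | Y ω ≤ t} ≤ 1 := prob_le_one
    calc H t ≤ (1 : ℝ≥0∞).toReal := ENNReal.toReal_mono ENNReal.one_ne_top h1
      _ = 1 := by simp
  have hFmono : Monotone F := fun a b hab =>
    ENNReal.toReal_mono (measure_ne_top μ _)
      (measure_mono fun ω (h : X ω ≤ a) => le_trans h hab)
  have hHmono : Monotone H := fun a b hab =>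
    ENNReal.toReal_mono (measure_ne_top μ _)
      (measure_mono fun ω (h : Y ω ≤ a) => le_trans h hab)
  -- positivity of F, H on (0, ∞)
  have hFpos : ∀ t : ℝ, 0 < t → 0 < F t := by
    intro t ht
    rcases (hFnn t).lt_or_eq with h | h
    · exact h
    exfalso
    have hzero : ∀ᶠ s in l, F (s * 1) / F s = 0 := by
      filter_upwards [Ioo_mem_nhdsGT_of_mem (Set.left_mem_Ico.mpr ht)] with s hs
      have h1 : F s ≤ F t := hFmono hs.2.le
      have h2 : F s = 0 := le_antisymm (by linarith) (hFnn s)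
      rw [mul_one, h2, div_zero]
    have h1 := hX' 1 one_pos
    have h2 : Tendsto (fun s => F (s * 1) / F s) l (nhds 0) :=
      Tendsto.congr' (EventuallyEq.symm hzero) tendsto_const_nhds
    have h3 := tendsto_nhds_unique h1 h2
    rw [Real.one_rpow] at h3
    exact one_ne_zero h3
  have hHpos : ∀ t : ℝ, 0 < t → 0 < H t := by
    intro t ht
    rcases (hHnn t).lt_or_eq with h | h
    · exact h
    exfalso
    have hzero : ∀ᶠ s in l, H (s * 1) / H s = 0 := by
      filter_upwards [Ioo_mem_nhdsGT_of_mem (Set.left_mem_Ico.mpr ht)] with s hs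
      have h1 : H s ≤ H t := hHmono hs.2.le
      have h2 : H s = 0 := le_antisymm (by linarith) (hHnn s)
      rw [mul_one, h2, div_zero]
    have h1 := hY' 1 one_pos
    have h2 : Tendsto (fun s => H (s * 1) / H s) l (nhds 0) :=
      Tendsto.congr' (EventuallyEq.symm hzero) tendsto_const_nhds
    have h3 := tendsto_nhds_unique h1 h2
    rw [Real.one_rpow] at h3
    exact one_ne_zero h3
  -- vanishing at 0
  have hF0 : F 0 = 0 := by
    by_contra h
    have hc : 0 < F 0 := (hFnn 0).lt_of_ne (Ne.symm h)
    set x : ℝ := (2 / F 0) ^ (α₁⁻¹) with hxdef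
    have hx : 0 < x := Real.rpow_pos_of_pos (by positivity) _
    have hxval : x ^ α₁ = 2 / F 0 := Real.rpow_inv_rpow (by positivity) hα₁.ne'
    have hbound : ∀ᶠ t in l, F (t * x) / F t ≤ 1 / F 0 := by
      filter_upwards [self_mem_nhdsWithin] with t ht
      exact div_le_div₀ (by norm_num) (hFle1 _) hc (hFmono (le_of_lt ht))
    have hle := le_of_tendsto (hX' x hx) hbound
    rw [hxval] at hle
    rw [div_le_div_iff₀ hc hc] at hle
    nlinarith
  have hH0 : H 0 = 0 := by
    by_contra h
    have hc : 0 < H 0 := (hHnn 0).lt_of_ne (Ne.symm h)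
    set x : ℝ := (2 / H 0) ^ (α₂⁻¹) with hxdef
    have hx : 0 < x := Real.rpow_pos_of_pos (by positivity) _
    have hxval : x ^ α₂ = 2 / H 0 := Real.rpow_inv_rpow (by positivity) hα₂.ne'
    have hbound : ∀ᶠ t in l, H (t * x) / H t ≤ 1 / H 0 := by
      filter_upwards [self_mem_nhdsWithin] with t ht
      exact div_le_div₀ (by norm_num) (hHle1 _) hc (hHmono (le_of_lt ht))
    have hle := le_of_tendsto (hY' x hx) hbound
    rw [hxval] at hle
    rw [div_le_div_iff₀ hc hc] at hle
    nlinarith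
  -- key tendsto lemmas including argument 0
  have hFkey : ∀ s : ℝ, 0 ≤ s → Tendsto (fun t => F (t * s) / F t) l (nhds (s ^ α₁)) := by
    intro s hs
    rcases hs.lt_or_eq with h | h
    · exact hX' s h
    · have heq : (fun t : ℝ => F (t * s) / F t) = fun _ => 0 := by
        funext t; rw [← h, mul_zero, hF0, zero_div]
      rw [heq, ← h, Real.zero_rpow hα₁.ne']
      exact tendsto_const_nhds
  have hHkey : ∀ s : ℝ, 0 ≤ s → Tendsto (fun t => H (t * s) / H t) l (nhds (s ^ α₂)) := by
    intro s hs
    rcases hs.lt_or_eq with h | h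
    · exact hY' s h
    · have heq : (fun t : ℝ => H (t * s) / H t) = fun _ => 0 := by
        funext t; rw [← h, mul_zero, hH0, zero_div]
      rw [heq, ← h, Real.zero_rpow hα₂.ne']
      exact tendsto_const_nhds
  -- product formula from independence
  have hprod : ∀ a b c : ℝ, a ≤ b →
      (μ ({ω | a < X ω ∧ X ω ≤ b} ∩ {ω | Y ω ≤ c})).toReal = (F b - F a) * H c := by
    intro a b c hab
    have h1 : {ω | a < X ω ∧ X ω ≤ b} = X ⁻¹' Set.Ioc a b := rfl
    have h2 : {ω | Y ω ≤ c} = Y ⁻¹' Set.Iic c := rfl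
    rw [h1, h2, hindep.measure_inter_preimage_eq_mul _ _ measurableSet_Ioc measurableSet_Iic,
      ENNReal.toReal_mul]
    congr 1
    have hsub : X ⁻¹' Set.Iic a ⊆ X ⁻¹' Set.Iic b := fun ω h => le_trans h hab
    have hIoc : X ⁻¹' Set.Ioc a b = X ⁻¹' Set.Iic b \ X ⁻¹' Set.Iic a := by
      rw [← Set.preimage_diff, Set.Iic_sdiff_Iic]
    rw [hIoc, measure_diff hsub (hXm measurableSet_Iic).nullMeasurableSet (measure_ne_top μ _),
      ENNReal.toReal_sub_of_le (measure_mono hsub) (measure_ne_top μ _)]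
    rfl
  -- upper bound
  have hGub : ∀ n : ℕ, 0 < n → ∀ t : ℝ, 0 < t →
      G t ≤ ∑ i ∈ Finset.range n,
        (F (t * (((i : ℝ) + 1) / n)) - F (t * ((i : ℝ) / n))) * H (t * (((n : ℝ) - i) / n)) := by
    intro n hn t ht
    have hn' : (0:ℝ) < n := by exact_mod_cast hn
    set A : ℕ → Set Ω := fun i =>
      {ω | t * ((i : ℝ) / n) < X ω ∧ X ω ≤ t * (((i : ℝ) + 1) / n)} ∩
        {ω | Y ω ≤ t * (((n : ℝ) - i) / n)} with hA
    have hsub : {ω | X ω + Y ω ≤ t} ⊆ {ω | X ω ≤ 0} ∪ ⋃ i ∈ Finset.range n, A i := by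
      intro ω hω
      simp only [Set.mem_setOf_eq] at hω
      rcases le_or_gt (X ω) 0 with h0 | h0
      · exact Or.inl h0
      right
      have hXt : X ω ≤ t := by have := hY0 ω; linarith
      obtain ⟨i, hi, h1, h2⟩ := regVar_exists_step n hn t (X ω) ht h0 hXt
      refine Set.mem_biUnion hi ⟨⟨h1, h2⟩, ?_⟩
      have heq : t * (((n : ℝ) - i) / n) = t - t * ((i : ℝ) / n) := by
        field_simp
      simp only [Set.mem_setOf_eq]
      rw [heq]
      linarith
    have hXzero : μ {ω | X ω ≤ 0} = 0 := by
      have h := hF0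
      rw [hFdef] at h
      simp only at h
      rcases (ENNReal.toReal_eq_zero_iff _).mp h with h' | h'
      · exact h'
      · exact absurd h' (measure_ne_top μ _)
    calc G t ≤ (μ (⋃ i ∈ Finset.range n, A i)).toReal := by
          apply ENNReal.toReal_mono (measure_ne_top μ _)
          calc μ {ω | X ω + Y ω ≤ t}
              ≤ μ ({ω | X ω ≤ 0} ∪ ⋃ i ∈ Finset.range n, A i) := measure_mono hsub
            _ ≤ μ {ω | X ω ≤ 0} + μ (⋃ i ∈ Finset.range n, A i) := measure_union_le _ _
            _ = μ (⋃ i ∈ Finset.range n, A i) := by rw [hXzero, zero_add]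
      _ ≤ (∑ i ∈ Finset.range n, μ (A i)).toReal := by
          apply ENNReal.toReal_mono
          · exact (ENNReal.sum_lt_top.mpr fun i _ => measure_lt_top μ _).ne
          · exact measure_biUnion_finset_le _ _
      _ = ∑ i ∈ Finset.range n, (μ (A i)).toReal :=
          ENNReal.toReal_sum fun i _ => measure_ne_top μ _
      _ = ∑ i ∈ Finset.range n,
            (F (t * (((i : ℝ) + 1) / n)) - F (t * ((i : ℝ) / n))) * H (t * (((n : ℝ) - i) / n)) := by
          refine Finset.sum_congr rfl fun i hi => ?_
          rw [hA]
          exact hprod _ _ _ (by gcongr <;> linarith)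
  -- lower bound
  have hGlb : ∀ n : ℕ, 0 < n → ∀ t : ℝ, 0 < t →
      (∑ i ∈ Finset.range n,
        (F (t * (((i : ℝ) + 1) / n)) - F (t * ((i : ℝ) / n))) * H (t * (((n : ℝ) - 1 - i) / n)))
        ≤ G t := by
    intro n hn t ht
    have hn' : (0:ℝ) < n := by exact_mod_cast hn
    set B : ℕ → Set Ω := fun i =>
      {ω | t * ((i : ℝ) / n) < X ω ∧ X ω ≤ t * (((i : ℝ) + 1) / n)} ∩
        {ω | Y ω ≤ t * (((n : ℝ) - 1 - i) / n)} with hB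
    have hmB : ∀ i, MeasurableSet (B i) := fun i => (hXm measurableSet_Ioc).inter (mY _)
    have hdisj : (↑(Finset.range n) : Set ℕ).PairwiseDisjoint B := by
      intro i _ j _ hij
      apply Set.disjoint_left.mpr
      intro ω hωi hωj
      rcases lt_or_gt_of_ne hij with h | h
      · have h1 : X ω ≤ t * (((i : ℝ) + 1) / n) := hωi.1.2
        have h2 : t * ((j : ℝ) / n) < X ω := hωj.1.1
        have h3 : (i : ℝ) + 1 ≤ (j : ℝ) := by exact_mod_cast h
        have h4 : t * (((i : ℝ) + 1) / n) ≤ t * ((j : ℝ) / n) := by gcongr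
        linarith
      · have h1 : X ω ≤ t * (((j : ℝ) + 1) / n) := hωj.1.2
        have h2 : t * ((i : ℝ) / n) < X ω := hωi.1.1
        have h3 : (j : ℝ) + 1 ≤ (i : ℝ) := by exact_mod_cast h
        have h4 : t * (((j : ℝ) + 1) / n) ≤ t * ((i : ℝ) / n) := by gcongr
        linarith
    have hsub : (⋃ i ∈ Finset.range n, B i) ⊆ {ω | X ω + Y ω ≤ t} := by
      intro ω hω
      simp only [Set.mem_iUnion, exists_prop] at hω
      obtain ⟨i, _, hωi⟩ := hω
      have h1 : X ω ≤ t * (((i : ℝ) + 1) / n) := hωi.1.2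
      have h2 : Y ω ≤ t * (((n : ℝ) - 1 - i) / n) := hωi.2
      have h3 : t * (((i : ℝ) + 1) / n) + t * (((n : ℝ) - 1 - i) / n) = t := by
        field_simp
        ring
      simp only [Set.mem_setOf_eq]
      linarith
    calc (∑ i ∈ Finset.range n,
          (F (t * (((i : ℝ) + 1) / n)) - F (t * ((i : ℝ) / n))) * H (t * (((n : ℝ) - 1 - i) / n)))
        = ∑ i ∈ Finset.range n, (μ (B i)).toReal := by
          refine Finset.sum_congr rfl fun i hi => ?_
          rw [hB]
          exact (hprod _ _ _ (by gcongr <;> linarith)).symm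
      _ = (μ (⋃ i ∈ Finset.range n, B i)).toReal := by
          rw [measure_biUnion_finset hdisj fun i _ => hmB i]
          exact (ENNReal.toReal_sum fun i _ => measure_ne_top μ _).symm
      _ ≤ G t := ENNReal.toReal_mono (measure_ne_top μ _) (measure_mono hsub)
  -- crude lower bound via halves
  have hGlow2 : ∀ t : ℝ, 0 < t → F (t * (1 / 2)) * H (t * (1 / 2)) ≤ G t := by
    intro t ht
    have hsub : ({ω | X ω ≤ t * (1 / 2)} ∩ {ω | Y ω ≤ t * (1 / 2)}) ⊆ {ω | X ω + Y ω ≤ t} := by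
      intro ω hω
      simp only [Set.mem_inter_iff, Set.mem_setOf_eq] at hω ⊢
      linarith [hω.1, hω.2]
    have hmeas : μ ({ω | X ω ≤ t * (1 / 2)} ∩ {ω | Y ω ≤ t * (1 / 2)})
        = μ {ω | X ω ≤ t * (1 / 2)} * μ {ω | Y ω ≤ t * (1 / 2)} :=
      hindep.measure_inter_preimage_eq_mul (Set.Iic (t * (1 / 2))) (Set.Iic (t * (1 / 2)))
        measurableSet_Iic measurableSet_Iic
    calc F (t * (1 / 2)) * H (t * (1 / 2))
        = (μ ({ω | X ω ≤ t * (1 / 2)} ∩ {ω | Y ω ≤ t * (1 / 2)})).toReal := by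
          rw [hmeas, ENNReal.toReal_mul]
      _ ≤ G t := ENNReal.toReal_mono (measure_ne_top μ _) (measure_mono hsub)
  have hFHpos : ∀ t : ℝ, 0 < t → 0 < F t * H t := fun t ht =>
    mul_pos (hFpos t ht) (hHpos t ht)
  have hGpos : ∀ t : ℝ, 0 < t → 0 < G t := fun t ht =>
    lt_of_lt_of_le (mul_pos (hFpos _ (by positivity)) (hHpos _ (by positivity))) (hGlow2 t ht)
  -- limits of the normalized Riemann sums
  have hsumL : ∀ n : ℕ, 0 < n →
      Tendsto (fun t => (∑ i ∈ Finset.range n,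
          (F (t * (((i : ℝ) + 1) / n)) - F (t * ((i : ℝ) / n))) *
            H (t * (((n : ℝ) - 1 - i) / n))) / (F t * H t)) l
        (nhds (∑ i ∈ Finset.range n,
          ((((i : ℝ) + 1) / n) ^ α₁ - ((i : ℝ) / n) ^ α₁) * (((n : ℝ) - 1 - i) / n) ^ α₂)) := by
    intro n hn
    have hn' : (0:ℝ) < n := by exact_mod_cast hn
    have heq : ∀ t : ℝ, (∑ i ∈ Finset.range n,
        (F (t * (((i : ℝ) + 1) / n)) - F (t * ((i : ℝ) / n))) *
          H (t * (((n : ℝ) - 1 - i) / n))) / (F t * H t)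
        = ∑ i ∈ Finset.range n,
          (F (t * (((i : ℝ) + 1) / n)) / F t - F (t * ((i : ℝ) / n)) / F t) *
            (H (t * (((n : ℝ) - 1 - i) / n)) / H t) := by
      intro t
      rw [Finset.sum_div]
      exact Finset.sum_congr rfl fun i hi => by rw [mul_div_mul_comm, sub_div]
    simp only [heq]
    apply tendsto_finset_sum
    intro i hi
    rw [Finset.mem_range] at hi
    have hi' : (i : ℝ) ≤ (n : ℝ) - 1 := by
      have : (i : ℝ) + 1 ≤ n := by exact_mod_cast hi
      linarith
    refine ((hFkey _ (by positivity)).sub (hFkey _ (by positivity))).mul (hHkey _ ?_)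
    apply div_nonneg _ hn'.le
    linarith
  have hsumU : ∀ n : ℕ, 0 < n →
      Tendsto (fun t => (∑ i ∈ Finset.range n,
          (F (t * (((i : ℝ) + 1) / n)) - F (t * ((i : ℝ) / n))) *
            H (t * (((n : ℝ) - i) / n))) / (F t * H t)) l
        (nhds (∑ i ∈ Finset.range n,
          ((((i : ℝ) + 1) / n) ^ α₁ - ((i : ℝ) / n) ^ α₁) * (((n : ℝ) - i) / n) ^ α₂)) := by
    intro n hn
    have hn' : (0:ℝ) < n := by exact_mod_cast hn
    have heq : ∀ t : ℝ, (∑ i ∈ Finset.range n,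
        (F (t * (((i : ℝ) + 1) / n)) - F (t * ((i : ℝ) / n))) *
          H (t * (((n : ℝ) - i) / n))) / (F t * H t)
        = ∑ i ∈ Finset.range n,
          (F (t * (((i : ℝ) + 1) / n)) / F t - F (t * ((i : ℝ) / n)) / F t) *
            (H (t * (((n : ℝ) - i) / n)) / H t) := by
      intro t
      rw [Finset.sum_div]
      exact Finset.sum_congr rfl fun i hi => by rw [mul_div_mul_comm, sub_div]
    simp only [heq]
    apply tendsto_finset_sum
    intro i hi
    rw [Finset.mem_range] at hi
    have hi' : (i : ℝ) ≤ (n : ℝ) - 1 := by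
      have : (i : ℝ) + 1 ≤ n := by exact_mod_cast hi
      linarith
    refine ((hFkey _ (by positivity)).sub (hFkey _ (by positivity))).mul (hHkey _ ?_)
    apply div_nonneg _ hn'.le
    linarith
  -- the normalized cdf of the sum converges to some constant C
  obtain ⟨C, hC⟩ := regVar_cauchy_aux l (fun t => G t / (F t * H t)) (by
    intro ε hε
    obtain ⟨n, hn0, hnε⟩ := regVar_riemann_aux α₁ α₂ hα₁ hα₂ (ε / 3) (by positivity)
    refine ⟨(∑ i ∈ Finset.range n,
        ((((i : ℝ) + 1) / n) ^ α₁ - ((i : ℝ) / n) ^ α₁) * (((n : ℝ) - 1 - i) / n) ^ α₂) - ε / 3,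
      (∑ i ∈ Finset.range n,
        ((((i : ℝ) + 1) / n) ^ α₁ - ((i : ℝ) / n) ^ α₁) * (((n : ℝ) - i) / n) ^ α₂) + ε / 3,
      by linarith, ?_⟩
    have h1 := Metric.tendsto_nhds.mp (hsumL n hn0) (ε / 3) (by positivity)
    have h2 := Metric.tendsto_nhds.mp (hsumU n hn0) (ε / 3) (by positivity)
    filter_upwards [h1, h2, self_mem_nhdsWithin] with t h1t h2t ht
    rw [Real.dist_eq] at h1t h2t
    have h1t' := (abs_lt.mp h1t).1
    have h2t' := (abs_lt.mp h2t).2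
    have hlow := div_le_div_of_nonneg_right (hGlb n hn0 t ht) (hFHpos t ht).le
    have hup := div_le_div_of_nonneg_right (hGub n hn0 t ht) (hFHpos t ht).le
    constructor
    · linarith
    · linarith)
  -- C is positive
  have hClow : (1 / 2 : ℝ) ^ α₁ * (1 / 2 : ℝ) ^ α₂ ≤ C := by
    refine le_of_tendsto_of_tendsto
      ((hFkey (1 / 2) (by norm_num)).mul (hHkey (1 / 2) (by norm_num))) hC ?_
    filter_upwards [self_mem_nhdsWithin] with t ht
    rw [div_mul_div_comm]
    exact div_le_div_of_nonneg_right (hGlow2 t ht) (hFHpos t ht).le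
  have hCpos : 0 < C := lt_of_lt_of_le (by positivity) hClow
  -- conclusion
  intro x hx
  have hmul : Tendsto (fun t : ℝ => t * x) l l := by
    rw [hldef]
    apply tendsto_nhdsWithin_of_tendsto_nhds_of_eventually_within
    · have h1 : Tendsto (fun t : ℝ => t * x) (nhds 0) (nhds 0) := by
        have := (continuous_mul_right x).tendsto (0 : ℝ)
        simpa using this
      exact h1.mono_left nhdsWithin_le_nhds
    · filter_upwards [self_mem_nhdsWithin] with t ht
      exact mul_pos ht hx
  have hRx : Tendsto (fun t => G (t * x) / (F (t * x) * H (t * x))) l (nhds C) := hC.comp hmul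
  have heqv : ∀ᶠ t in l, G (t * x) / G t =
      ((G (t * x) / (F (t * x) * H (t * x))) / (G t / (F t * H t))) *
        ((F (t * x) / F t) * (H (t * x) / H t)) := by
    filter_upwards [self_mem_nhdsWithin] with t ht
    have htx : 0 < t * x := mul_pos ht hx
    have h1 := (hFpos t ht).ne'
    have h2 := (hHpos t ht).ne'
    have h3 := (hGpos t ht).ne'
    have h4 := (hFpos _ htx).ne'
    have h5 := (hHpos _ htx).ne'
    have h6 := (hGpos _ htx).ne'
    field_simp
  have hfinal : Tendsto (fun t => G (t * x) / G t) l
      (nhds ((C / C) * (x ^ α₁ * x ^ α₂))) :=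
    Tendsto.congr' (EventuallyEq.symm heqv)
      (((hRx.div hC hCpos.ne')).mul ((hX' x hx).mul (hY' x hx)))
  rw [div_self hCpos.ne', one_mul, ← Real.rpow_add hx] at hfinal
  exact hfinal
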